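/- Let α > 0 and let N, M ∈ ℤ ∪ {−∞, +∞} with N < M. If {a_k} is a strongly decreasing sequence of positive reals (i.e. sup_k a_{k+1}/a_k < 1) and {b_k} is any sequence of positive reals, then Σ_{k=N}^{M} a_k (Σ_{i=N}^{k} b_i)^α is comparable, up to multiplicative constants depending only on α and the strong decrease constant, to Σ_{k=N}^{M} a_k b_k^α. -/

import Mathlib

open ENNReal

/-- The set of integers `k` with `N ≤ k ≤ M`, where `N, M` are extended reals
(so that `N = -∞` or `M = +∞` are allowed). -/
def zset (N M : EReal) : Set ℤ := {k : ℤ | N ≤ ((k : ℝ) : EReal) ∧ ((k : ℝ) : EReal) ≤ M}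

lemma zle {i k : ℤ} : ((i : ℝ) : EReal) ≤ ((k : ℝ) : EReal) ↔ i ≤ k := by
  rw [EReal.coe_le_coe_iff]; exact_mod_cast Iff.rfl

/-- Geometric tail bound: if `f` is supported on `{k | i ≤ k}` and dominated there by
`x ^ (k-i) * c`, then its sum is at most `(1-x)⁻¹ * c`. -/
lemma zgeom_le (x c : ℝ≥0∞) (i : ℤ) (f : ℤ → ℝ≥0∞)
    (h : ∀ k, f k ≤ if i ≤ k then x ^ (k - i).toNat * c else 0) :
    ∑' k, f k ≤ (1 - x)⁻¹ * c := by
  calc ∑' k, f k ≤ ∑' k, (if i ≤ k then x ^ (k - i).toNat * c else 0) :=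
        ENNReal.tsum_le_tsum h
    _ = ∑' n : ℕ, (if i ≤ i + (n : ℤ) then x ^ (i + (n : ℤ) - i).toNat * c else 0) := by
        refine (Function.Injective.tsum_eq (g := fun n : ℕ => i + (n : ℤ)) ?_ ?_).symm
        · intro m n hmn; simp only at hmn; omega
        · intro k hk
          have hik : i ≤ k := by
            by_contra hc
            simp [if_neg hc] at hk
          exact ⟨(k - i).toNat, by simp only; omega⟩
    _ = ∑' n : ℕ, x ^ n * c := by
        refine tsum_congr fun n => ?_
        have hn : (i + (n : ℤ) - i).toNat = n := by omega
        rw [if_pos (by omega), hn]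
    _ = (1 - x)⁻¹ * c := by rw [ENNReal.tsum_mul_right, ENNReal.tsum_geometric]

/-- Geometric bound for sums below a fixed point `k`. -/
lemma zgeom_le' (x : ℝ≥0∞) (k : ℤ) (f : ℤ → ℝ≥0∞)
    (h : ∀ i, f i ≤ if i ≤ k then x ^ (k - i).toNat else 0) :
    ∑' i, f i ≤ (1 - x)⁻¹ := by
  calc ∑' i, f i ≤ ∑' i, (if i ≤ k then x ^ (k - i).toNat else 0) :=
        ENNReal.tsum_le_tsum h
    _ = ∑' n : ℕ, (if k - (n : ℤ) ≤ k then x ^ (k - (k - (n : ℤ))).toNat else 0) := by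
        refine (Function.Injective.tsum_eq (g := fun n : ℕ => k - (n : ℤ)) ?_ ?_).symm
        · intro m n hmn; simp only at hmn; omega
        · intro i hi
          have hik : i ≤ k := by
            by_contra hc
            simp [if_neg hc] at hi
          exact ⟨(k - i).toNat, by simp only; omega⟩
    _ = ∑' n : ℕ, x ^ n := by
        refine tsum_congr fun n => ?_
        have hn : (k - (k - (n : ℤ))).toNat = n := by omega
        rw [if_pos (by omega), hn]
    _ = (1 - x)⁻¹ := ENNReal.tsum_geometric x

lemma pow_rpow_comm (x : ℝ≥0∞) (n : ℕ) (y : ℝ) : (x ^ n) ^ y = (x ^ y) ^ n := by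
  rw [← ENNReal.rpow_natCast x n, ← ENNReal.rpow_mul, mul_comm, ENNReal.rpow_mul,
    ENNReal.rpow_natCast]

theorem sum_partial_sum_power_of_strongly_decreasing (α ρ : ℝ) (hα : 0 < α) (hρ : ρ < 1) :
    ∃ c C : ℝ, 0 < c ∧ 0 < C ∧
      ∀ (N M : EReal), N < M → ∀ (a b : ℤ → ℝ),
        (∀ k, 0 < a k) → (∀ k, 0 < b k) →
        (∀ k : ℤ, k ∈ zset N M → (k + 1) ∈ zset N M → a (k + 1) ≤ ρ * a k) →
        ENNReal.ofReal c *
            (∑' k : zset N M, ENNReal.ofReal (a (k : ℤ)) * ENNReal.ofReal (b (k : ℤ)) ^ α) ≤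
          (∑' k : zset N M, ENNReal.ofReal (a (k : ℤ)) *
              (∑' i : zset N (((k : ℤ) : ℝ) : EReal), ENNReal.ofReal (b (i : ℤ))) ^ α) ∧
        (∑' k : zset N M, ENNReal.ofReal (a (k : ℤ)) *
            (∑' i : zset N (((k : ℤ) : ℝ) : EReal), ENNReal.ofReal (b (i : ℤ))) ^ α) ≤
          ENNReal.ofReal C *
            (∑' k : zset N M, ENNReal.ofReal (a (k : ℤ)) * ENNReal.ofReal (b (k : ℤ)) ^ α) := by
  -- the modified ratio, in (0,1)
  set ρ' : ℝ := max ρ (1/2) with hρ'def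
  have hρ'0 : 0 < ρ' := lt_of_lt_of_le (by norm_num) (le_max_right _ _)
  have hρ'1 : ρ' < 1 := max_lt hρ (by norm_num)
  set θ : ℝ := ρ' ^ (1 / (2 * α)) with hθdef
  set σ : ℝ := ρ' ^ (2⁻¹ : ℝ) with hσdef
  have hθ0 : 0 < θ := Real.rpow_pos_of_pos hρ'0 _
  have hθ1 : θ < 1 := Real.rpow_lt_one hρ'0.le hρ'1 (by positivity)
  have hσ0 : 0 < σ := Real.rpow_pos_of_pos hρ'0 _
  have hσ1 : σ < 1 := Real.rpow_lt_one hρ'0.le hρ'1 (by norm_num)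
  have hθα : θ ^ α = σ := by
    rw [hθdef, hσdef, ← Real.rpow_mul hρ'0.le]
    congr 1
    field_simp
  have hσσ : σ * σ = ρ' := by
    rw [hσdef, ← Real.rpow_add hρ'0]
    norm_num
  refine ⟨1, (1 - θ)⁻¹ ^ α * (1 - σ)⁻¹, one_pos, mul_pos (Real.rpow_pos_of_pos (inv_pos.2 (by linarith)) _) (inv_pos.2 (by linarith)), ?_⟩
  intro N M _ a b ha hb hdec
  set S := zset N M with hSdef
  set A : ℤ → ℝ≥0∞ := fun k => ENNReal.ofReal (a k) with hAdef
  set B : ℤ → ℝ≥0∞ := fun k => ENNReal.ofReal (b k) with hBdef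
  set t : ℝ≥0∞ := ENNReal.ofReal θ with htdef
  set s : ℝ≥0∞ := ENNReal.ofReal σ with hsdef
  set r : ℝ≥0∞ := ENNReal.ofReal ρ' with hrdef
  have ht0 : t ≠ 0 := by simp [htdef, hθ0, ENNReal.ofReal_pos.mpr hθ0]
  have httop : t ≠ ⊤ := ENNReal.ofReal_ne_top
  have hts : t ^ α = s := by
    rw [htdef, ENNReal.ofReal_rpow_of_pos hθ0, hθα]
  have hrs : r * s⁻¹ = s := by
    rw [hrdef, hsdef, ← ENNReal.ofReal_inv_of_pos hσ0, ← ENNReal.ofReal_mul hρ'0.le]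
    congr 1
    field_simp
    ring
    linarith [hσσ]
  -- decay of a along the set
  have hdec' : ∀ k, k ∈ S → (k + 1) ∈ S → a (k + 1) ≤ ρ' * a k := by
    intro k hk hk1
    exact (hdec k hk hk1).trans
      (mul_le_mul_of_nonneg_right (le_max_left _ _) (ha k).le)
  have hbetween : ∀ i j k : ℤ, i ≤ j → j ≤ k → i ∈ S → k ∈ S → j ∈ S := by
    intro i j k hij hjk hi hk
    exact ⟨le_trans hi.1 (zle.mpr hij), le_trans (zle.mpr hjk) hk.2⟩
  have key : ∀ n : ℕ, ∀ i : ℤ, i ∈ S → (i + (n : ℤ)) ∈ S → a (i + (n : ℤ)) ≤ ρ' ^ n * a i := by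
    intro n
    induction n with
    | zero => intro i hi _; simp
    | succ n ih =>
      intro i hi hn1
      have h1 : (i + (n : ℤ)) ∈ S := hbetween i (i + n) (i + (n + 1 : ℕ)) (by omega) (by push_cast; omega) hi hn1
      have h2 : a (i + (n : ℤ) + 1) ≤ ρ' * a (i + (n : ℤ)) := by
        apply hdec' _ h1
        have : i + (n : ℤ) + 1 = i + ((n + 1 : ℕ) : ℤ) := by push_cast; ring
        rw [this]; exact hn1
      have h3 := ih i hi h1
      have : i + ((n + 1 : ℕ) : ℤ) = i + (n : ℤ) + 1 := by push_cast; ring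
      rw [this]
      calc a (i + (n : ℤ) + 1) ≤ ρ' * a (i + (n : ℤ)) := h2
        _ ≤ ρ' * (ρ' ^ n * a i) := mul_le_mul_of_nonneg_left h3 hρ'0.le
        _ = ρ' ^ (n + 1) * a i := by ring
  have decay : ∀ i k : ℤ, i ∈ S → k ∈ S → i ≤ k → a k ≤ ρ' ^ (k - i).toNat * a i := by
    intro i k hi hk hik
    have hk' : i + (((k - i).toNat : ℕ) : ℤ) = k := by omega
    have h := key (k - i).toNat i hi (by rw [hk']; exact hk)
    rw [hk'] at h
    exact h
  have Adec : ∀ i k : ℤ, i ∈ S → k ∈ S → i ≤ k → A k ≤ r ^ (k - i).toNat * A i := by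
    intro i k hi hk hik
    calc A k ≤ ENNReal.ofReal (ρ' ^ (k - i).toNat * a i) :=
          ENNReal.ofReal_le_ofReal (decay i k hi hk hik)
      _ = r ^ (k - i).toNat * A i := by
          rw [ENNReal.ofReal_mul (by positivity), ENNReal.ofReal_pow hρ'0.le]
  constructor
  · -- lower bound, c = 1
    rw [ENNReal.ofReal_one, one_mul]
    refine ENNReal.tsum_le_tsum fun k => ?_
    refine mul_le_mul_right (ENNReal.rpow_le_rpow ?_ hα.le) _
    exact ENNReal.le_tsum (⟨(k : ℤ), ⟨k.2.1, zle.mpr le_rfl⟩⟩ : zset N (((k : ℤ) : ℝ) : EReal))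
  · -- upper bound
    set D : ℝ≥0∞ := ((1 - t)⁻¹) ^ α with hDdef
    set g : ℤ → ℤ → ℝ≥0∞ := fun k i =>
      (zset N ((k : ℝ) : EReal)).indicator
        (fun i' => s ^ ((k - i').toNat) * (A i' * B i' ^ α)) i with hgdef
    -- per-k estimate
    have key1 : ∀ k : S, A (k : ℤ) * (∑' i : zset N (((k : ℤ) : ℝ) : EReal), B (i : ℤ)) ^ α
        ≤ D * ∑' i : ℤ, g (k : ℤ) i := by
      intro k
      set K : ℤ := (k : ℤ) with hKdef
      set Z := zset N ((K : ℝ) : EReal) with hZdef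
      have hZsub : ∀ i : ℤ, i ∈ Z → i ∈ S ∧ i ≤ K := by
        intro i hi
        have hiK : i ≤ K := zle.mp hi.2
        exact ⟨⟨hi.1, le_trans hi.2 k.2.2⟩, hiK⟩
      set f : Z → ℝ≥0∞ := fun i => (t ^ (K - (i : ℤ)).toNat)⁻¹ * B (i : ℤ) with hfdef
      set P : ℝ≥0∞ := ∑' i : Z, (f i) ^ α with hPdef
      have hfP : ∀ i : Z, f i ≤ P ^ (1 / α) := by
        intro i
        have h1 : f i = ((f i) ^ α) ^ (1 / α) := by
          rw [← ENNReal.rpow_mul, mul_one_div_cancel hα.ne', ENNReal.rpow_one]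
        rw [h1]
        exact ENNReal.rpow_le_rpow (ENNReal.le_tsum i) (by positivity)
      have hBf : ∀ i : Z, B (i : ℤ) = t ^ (K - (i : ℤ)).toNat * f i := by
        intro i
        rw [hfdef, ← mul_assoc,
          ENNReal.mul_inv_cancel (pow_ne_zero _ ht0) (ENNReal.pow_ne_top httop), one_mul]
      have hgeo : (∑' i : Z, t ^ (K - (i : ℤ)).toNat) ≤ (1 - t)⁻¹ := by
        rw [tsum_subtype Z (fun i => t ^ (K - i).toNat)]
        refine zgeom_le' t K _ fun i => ?_
        by_cases hi : i ∈ Z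
        · rw [Set.indicator_of_mem hi, if_pos (hZsub i hi).2]
        · rw [Set.indicator_of_notMem hi]
          exact zero_le
      have hInner : (∑' i : Z, B (i : ℤ)) ≤ (1 - t)⁻¹ * P ^ (1 / α) := by
        calc (∑' i : Z, B (i : ℤ)) = ∑' i : Z, t ^ (K - (i : ℤ)).toNat * f i :=
              tsum_congr hBf
          _ ≤ ∑' i : Z, t ^ (K - (i : ℤ)).toNat * P ^ (1 / α) :=
              ENNReal.tsum_le_tsum fun i => mul_le_mul_right (hfP i) _
          _ = (∑' i : Z, t ^ (K - (i : ℤ)).toNat) * P ^ (1 / α) := ENNReal.tsum_mul_right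
          _ ≤ (1 - t)⁻¹ * P ^ (1 / α) := mul_le_mul_left hgeo _
      have hInnerα : (∑' i : Z, B (i : ℤ)) ^ α ≤ D * P := by
        calc (∑' i : Z, B (i : ℤ)) ^ α ≤ ((1 - t)⁻¹ * P ^ (1 / α)) ^ α :=
              ENNReal.rpow_le_rpow hInner hα.le
          _ = D * (P ^ (1 / α)) ^ α := ENNReal.mul_rpow_of_nonneg _ _ hα.le
          _ = D * P := by
              rw [← ENNReal.rpow_mul, one_div_mul_cancel hα.ne', ENNReal.rpow_one]
      have hterm : ∀ i : Z, A K * (f i) ^ α ≤ s ^ (K - (i : ℤ)).toNat * (A (i : ℤ) * B (i : ℤ) ^ α) := by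
        intro i
        obtain ⟨hiS, hiK⟩ := hZsub (i : ℤ) i.2
        have hfα : (f i) ^ α = (s ^ (K - (i : ℤ)).toNat)⁻¹ * B (i : ℤ) ^ α := by
          show ((t ^ (K - (i : ℤ)).toNat)⁻¹ * B (i : ℤ)) ^ α = _
          rw [ENNReal.mul_rpow_of_nonneg _ _ hα.le, ENNReal.inv_rpow,
            pow_rpow_comm, hts]
        rw [hfα]
        calc A K * ((s ^ (K - (i : ℤ)).toNat)⁻¹ * B (i : ℤ) ^ α)
            ≤ (r ^ (K - (i : ℤ)).toNat * A (i : ℤ)) * ((s ^ (K - (i : ℤ)).toNat)⁻¹ * B (i : ℤ) ^ α) :=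
              mul_le_mul_left (Adec (i : ℤ) K hiS k.2 hiK) _
          _ = (r ^ (K - (i : ℤ)).toNat * (s ^ (K - (i : ℤ)).toNat)⁻¹) * (A (i : ℤ) * B (i : ℤ) ^ α) := by
              ring
          _ = s ^ (K - (i : ℤ)).toNat * (A (i : ℤ) * B (i : ℤ) ^ α) := by
              rw [ENNReal.inv_pow, ← mul_pow, hrs]
      calc A K * (∑' i : Z, B (i : ℤ)) ^ α ≤ A K * (D * P) := mul_le_mul_right hInnerα _
        _ = D * (A K * P) := by ring
        _ = D * ∑' i : Z, A K * (f i) ^ α := by rw [hPdef, ENNReal.tsum_mul_left]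
        _ ≤ D * ∑' i : Z, s ^ (K - (i : ℤ)).toNat * (A (i : ℤ) * B (i : ℤ) ^ α) :=
            mul_le_mul_right (ENNReal.tsum_le_tsum hterm) _
        _ = D * ∑' i : ℤ, g K i := by
            simp only [hgdef]
            congr 1
            exact tsum_subtype Z (fun i' => s ^ ((K - i').toNat) * (A i' * B i' ^ α))
    -- sum over k and swap
    have key2 : ∀ i : ℤ, (∑' k : ℤ, S.indicator (fun k' => g k' i) k)
        ≤ (1 - s)⁻¹ * S.indicator (fun i' => A i' * B i' ^ α) i := by
      intro i
      refine zgeom_le s _ i _ fun k => ?_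
      by_cases hk : k ∈ S
      · rw [Set.indicator_of_mem hk]
        simp only [hgdef]
        by_cases hik : i ∈ zset N ((k : ℝ) : EReal)
        · have hiS : i ∈ S := ⟨hik.1, le_trans hik.2 hk.2⟩
          have hikk : i ≤ k := zle.mp hik.2
          rw [Set.indicator_of_mem hik, if_pos hikk, Set.indicator_of_mem hiS]
        · rw [Set.indicator_of_notMem hik]
          exact zero_le
      · rw [Set.indicator_of_notMem hk]
        exact zero_le
    have hswap : (∑' k : S, ∑' i : ℤ, g (k : ℤ) i)
        ≤ (1 - s)⁻¹ * ∑' k : S, A (k : ℤ) * B (k : ℤ) ^ α := by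
      calc (∑' k : S, ∑' i : ℤ, g (k : ℤ) i)
          = ∑' k : ℤ, S.indicator (fun k' => ∑' i : ℤ, g k' i) k :=
            tsum_subtype S (fun k' => ∑' i : ℤ, g k' i)
        _ = ∑' k : ℤ, ∑' i : ℤ, S.indicator (fun k' => g k' i) k := by
            refine tsum_congr fun k => ?_
            by_cases hk : k ∈ S
            · simp [Set.indicator_of_mem hk]
            · simp [Set.indicator_of_notMem hk]
        _ = ∑' i : ℤ, ∑' k : ℤ, S.indicator (fun k' => g k' i) k := ENNReal.tsum_comm
        _ ≤ ∑' i : ℤ, (1 - s)⁻¹ * S.indicator (fun i' => A i' * B i' ^ α) i :=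
            ENNReal.tsum_le_tsum key2
        _ = (1 - s)⁻¹ * ∑' i : ℤ, S.indicator (fun i' => A i' * B i' ^ α) i :=
            ENNReal.tsum_mul_left
        _ = (1 - s)⁻¹ * ∑' k : S, A (k : ℤ) * B (k : ℤ) ^ α := by
            rw [tsum_subtype S (fun i' => A i' * B i' ^ α)]
    have hCeq : ENNReal.ofReal ((1 - θ)⁻¹ ^ α * (1 - σ)⁻¹) = D * (1 - s)⁻¹ := by
      have h1t : (1 : ℝ≥0∞) - t = ENNReal.ofReal (1 - θ) := by
        rw [ENNReal.ofReal_sub _ hθ0.le, ENNReal.ofReal_one]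
      have h1s : (1 : ℝ≥0∞) - s = ENNReal.ofReal (1 - σ) := by
        rw [ENNReal.ofReal_sub _ hσ0.le, ENNReal.ofReal_one]
      rw [ENNReal.ofReal_mul (Real.rpow_nonneg (inv_nonneg.2 (by linarith : (0:ℝ) ≤ 1 - θ)) _),
        hDdef, h1t, h1s,
        ← ENNReal.ofReal_inv_of_pos (by linarith : (0:ℝ) < 1 - θ),
        ← ENNReal.ofReal_inv_of_pos (by linarith : (0:ℝ) < 1 - σ),
        ENNReal.ofReal_rpow_of_pos (inv_pos.2 (by linarith : (0:ℝ) < 1 - θ))]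
    calc (∑' k : S, A (k : ℤ) * (∑' i : zset N (((k : ℤ) : ℝ) : EReal), B (i : ℤ)) ^ α)
        ≤ ∑' k : S, D * ∑' i : ℤ, g (k : ℤ) i := ENNReal.tsum_le_tsum key1
      _ = D * ∑' k : S, ∑' i : ℤ, g (k : ℤ) i := ENNReal.tsum_mul_left
      _ ≤ D * ((1 - s)⁻¹ * ∑' k : S, A (k : ℤ) * B (k : ℤ) ^ α) :=
          mul_le_mul_right hswap _
      _ = ENNReal.ofReal ((1 - θ)⁻¹ ^ α * (1 - σ)⁻¹) * ∑' k : S, A (k : ℤ) * B (k : ℤ) ^ α := by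
          rw [hCeq, mul_assoc]
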